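/- Let a, b be odd integers with a ≥ 3, b ≥ 1, and let T be the generalized Collatz map. Suppose Ω is a cycle of T with K odd elements and L even elements (K ≥ 1). Then 0 < (K+L) - K·log(a)/log(2) ≤ bK / (a·log(2)·min(Ω₁)), where Ω₁ is the set of odd elements of Ω. -/

import Mathlib

/-- For a cycle `Ω` of `T` with `K` odd and `L` even elements,
`0 < (K+L) - K·log a/log 2 ≤ b·K/(a·log 2·min Ω₁)`. -/
theorem cycle_log_inequality
    (a b : ℤ) (ha : Odd a) (hb : Odd b) (ha3 : 3 ≤ a) (hb1 : 1 ≤ b)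
    (T : ℤ → ℤ) (hT : ∀ n, T n = if n % 2 = 0 then n / 2 else (a * n + b) / 2)
    (Ω : Finset ℤ) (hpos : ∀ x ∈ Ω, 0 < x) (hcycle : Ω.image T = Ω)
    (Ω₁ : Finset ℤ) (hΩ₁ : Ω₁ = Ω.filter (fun x => Odd x))
    (K L : ℕ) (hK : K = Ω₁.card) (hL : L = (Ω \ Ω₁).card)
    (hK1 : 1 ≤ K) (hne : Ω₁.Nonempty) :
    0 < (K + L : ℝ) - K * (Real.log a / Real.log 2) ∧
      (K + L : ℝ) - K * (Real.log a / Real.log 2) ≤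
        b * K / (a * Real.log 2 * (Ω₁.min' hne : ℝ)) := by
  classical
  have hlog2 : 0 < Real.log 2 := Real.log_pos (by norm_num)
  have ha0 : (0:ℤ) < a := by linarith
  set m : ℤ := Ω₁.min' hne with hm
  have hmem : m ∈ Ω₁ := Finset.min'_mem _ _
  have hmΩ : m ∈ Ω := by
    rw [hΩ₁] at hmem; exact (Finset.mem_filter.mp hmem).1
  have hm0 : (0:ℤ) < m := hpos _ hmΩ
  have hΩ₁pos : ∀ x ∈ Ω₁, (0:ℤ) < x := by
    intro x hx; rw [hΩ₁] at hx; exact hpos x (Finset.mem_filter.mp hx).1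
  have hΩ₁odd : ∀ x ∈ Ω₁, Odd x := by
    intro x hx; rw [hΩ₁] at hx; exact (Finset.mem_filter.mp hx).2
  have haxb : ∀ x ∈ Ω₁, (0:ℤ) < a*x+b := by
    intro x hx; nlinarith [hΩ₁pos x hx]
  set E : Finset ℤ := Ω \ Ω₁ with hE
  have hEsub : E ⊆ Ω := Finset.sdiff_subset
  have hEeven : ∀ x ∈ E, x % 2 = 0 := by
    intro x hx
    rw [hE, Finset.mem_sdiff] at hx
    have hnotodd : ¬ Odd x := by
      intro hodd
      exact hx.2 (by rw [hΩ₁]; exact Finset.mem_filter.mpr ⟨hx.1, hodd⟩)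
    exact Int.even_iff.mp (Int.not_odd_iff_even.mp hnotodd)
  -- injectivity of T on Ω
  have hinj : ∀ x ∈ Ω, ∀ y ∈ Ω, T x = T y → x = y := by
    have h := Finset.injOn_of_card_image_eq (s := Ω) (f := T) (by rw [hcycle])
    exact fun x hx y hy hxy => h hx hy hxy
  have hprodT : ∏ x ∈ Ω, T x = ∏ x ∈ Ω, x := by
    have h := Finset.prod_image (g := T) (f := fun x : ℤ => x) (s := Ω) hinj
    rw [hcycle] at h
    exact h.symm
  have hsplit : ∀ f : ℤ → ℤ, ∏ x ∈ Ω, f x = (∏ x ∈ Ω₁, f x) * ∏ x ∈ E, f x := by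
    intro f
    rw [hE, hΩ₁, ← Finset.filter_not]
    exact (Finset.prod_filter_mul_prod_filter_not Ω _ f).symm
  have hTodd : ∀ x ∈ Ω₁, T x = (a*x+b)/2 := by
    intro x hx
    have hx1 : x % 2 = 1 := Int.odd_iff.mp (hΩ₁odd x hx)
    rw [hT x, if_neg (by omega)]
  have hTeven : ∀ x ∈ E, T x = x/2 := by
    intro x hx
    rw [hT x, if_pos (hEeven x hx)]
  have h2K : ∏ x ∈ Ω₁, (a*x+b) = 2^K * ∏ x ∈ Ω₁, ((a*x+b)/2) := by
    rw [hK, ← Finset.prod_const (2:ℤ), ← Finset.prod_mul_distrib]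
    refine Finset.prod_congr rfl (fun x hx => ?_)
    have hdvd : (2:ℤ) ∣ a*x+b := ((ha.mul (hΩ₁odd x hx)).add_odd hb).two_dvd
    exact (Int.mul_ediv_cancel' hdvd).symm
  have h2L : ∏ x ∈ E, x = 2^L * ∏ x ∈ E, (x/2) := by
    rw [hL, ← Finset.prod_const (2:ℤ), ← Finset.prod_mul_distrib]
    refine Finset.prod_congr rfl (fun x hx => ?_)
    have hdvd : (2:ℤ) ∣ x := Int.dvd_of_emod_eq_zero (hEeven x hx)
    exact (Int.mul_ediv_cancel' hdvd).symm
  have h1 : (∏ x ∈ Ω₁, x) * ∏ x ∈ E, x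
      = (∏ x ∈ Ω₁, ((a*x+b)/2)) * ∏ x ∈ E, (x/2) := by
    calc (∏ x ∈ Ω₁, x) * ∏ x ∈ E, x = ∏ x ∈ Ω, x := (hsplit _).symm
    _ = ∏ x ∈ Ω, T x := hprodT.symm
    _ = (∏ x ∈ Ω₁, T x) * ∏ x ∈ E, T x := hsplit T
    _ = (∏ x ∈ Ω₁, ((a*x+b)/2)) * ∏ x ∈ E, (x/2) := by
        rw [Finset.prod_congr rfl hTodd, Finset.prod_congr rfl hTeven]
  have hPE : (0:ℤ) < ∏ x ∈ E, x := Finset.prod_pos (fun x hx => hpos x (hEsub hx))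
  have key : (2:ℤ)^(K+L) * ∏ x ∈ Ω₁, x = ∏ x ∈ Ω₁, (a*x+b) := by
    have h2 : (∏ x ∈ E, x) * ((2:ℤ)^(K+L) * ∏ x ∈ Ω₁, x)
        = (∏ x ∈ E, x) * ∏ x ∈ Ω₁, (a*x+b) := by
      calc (∏ x ∈ E, x) * ((2:ℤ)^(K+L) * ∏ x ∈ Ω₁, x)
          = (2:ℤ)^K * (2:ℤ)^L * ((∏ x ∈ Ω₁, x) * ∏ x ∈ E, x) := by
            rw [pow_add]; ring
        _ = (2:ℤ)^K * (2:ℤ)^L * ((∏ x ∈ Ω₁, ((a*x+b)/2)) * ∏ x ∈ E, (x/2)) := by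
            rw [h1]
        _ = (2^K * ∏ x ∈ Ω₁, ((a*x+b)/2)) * (2^L * ∏ x ∈ E, (x/2)) := by ring
        _ = (∏ x ∈ Ω₁, (a*x+b)) * ∏ x ∈ E, x := by rw [← h2K, ← h2L]
        _ = (∏ x ∈ E, x) * ∏ x ∈ Ω₁, (a*x+b) := by ring
    exact mul_left_cancel₀ (ne_of_gt hPE) h2
  -- move to ℝ
  have hcast : (2:ℝ)^(K+L) * ∏ x ∈ Ω₁, (x:ℝ) = ∏ x ∈ Ω₁, ((a:ℝ)*x+b) := by
    have := congrArg (fun z : ℤ => (z : ℝ)) key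
    push_cast at this
    exact this
  have hxne : ∀ x ∈ Ω₁, ((x:ℝ)) ≠ 0 := fun x hx => by
    have := hΩ₁pos x hx; positivity
  have haxbne : ∀ x ∈ Ω₁, ((a:ℝ)*x+b) ≠ 0 := fun x hx => by
    have h := haxb x hx
    have : (0:ℝ) < (a:ℝ)*x+b := by exact_mod_cast h
    positivity
  have hPne : (∏ x ∈ Ω₁, (x:ℝ)) ≠ 0 := Finset.prod_ne_zero_iff.mpr hxne
  have hlogkey : ((K+L : ℕ) : ℝ) * Real.log 2 + ∑ x ∈ Ω₁, Real.log (x:ℝ)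
      = ∑ x ∈ Ω₁, Real.log ((a:ℝ)*x+b) := by
    have h := congrArg Real.log hcast
    rw [Real.log_mul (by positivity) hPne, Real.log_pow,
      Real.log_prod hxne, Real.log_prod haxbne] at h
    exact h
  -- sum identity
  have hKcast : (K : ℝ) * Real.log a = ∑ _x ∈ Ω₁, Real.log (a:ℝ) := by
    rw [Finset.sum_const, hK, nsmul_eq_mul]
  have hSum : ∑ x ∈ Ω₁, (Real.log ((a:ℝ)*x+b) - Real.log (x:ℝ) - Real.log (a:ℝ))
      = ((K:ℝ)+L) * Real.log 2 - K * Real.log a := by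
    rw [Finset.sum_sub_distrib, Finset.sum_sub_distrib, ← hlogkey, hKcast]
    push_cast
    ring
  have haR : (0:ℝ) < (a:ℝ) := by exact_mod_cast ha0
  have hbR : (0:ℝ) < (b:ℝ) := by exact_mod_cast hb1.trans_lt' (by norm_num)
  have hmR : (0:ℝ) < (m:ℝ) := by exact_mod_cast hm0
  -- per-term bounds
  have hterm_pos : ∀ x ∈ Ω₁,
      0 < Real.log ((a:ℝ)*x+b) - Real.log (x:ℝ) - Real.log (a:ℝ) := by
    intro x hx
    have hx0 : (0:ℝ) < (x:ℝ) := by exact_mod_cast hΩ₁pos x hx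
    have hax : (0:ℝ) < (a:ℝ)*x := by positivity
    have hlt : Real.log ((a:ℝ)*x) < Real.log ((a:ℝ)*x+b) :=
      Real.log_lt_log hax (by linarith)
    have hmul : Real.log ((a:ℝ)*x) = Real.log (a:ℝ) + Real.log (x:ℝ) :=
      Real.log_mul (ne_of_gt haR) (ne_of_gt hx0)
    linarith
  have hterm_le : ∀ x ∈ Ω₁,
      Real.log ((a:ℝ)*x+b) - Real.log (x:ℝ) - Real.log (a:ℝ)
        ≤ (b:ℝ) / ((a:ℝ)*m) := by
    intro x hx
    have hx0 : (0:ℝ) < (x:ℝ) := by exact_mod_cast hΩ₁pos x hx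
    have hax : (0:ℝ) < (a:ℝ)*x := by positivity
    have hmx : (m:ℝ) ≤ (x:ℝ) := by exact_mod_cast Finset.min'_le _ _ hx
    have hmul : Real.log ((a:ℝ)*x) = Real.log (a:ℝ) + Real.log (x:ℝ) :=
      Real.log_mul (ne_of_gt haR) (ne_of_gt hx0)
    have hdiv : Real.log (((a:ℝ)*x+b)/((a:ℝ)*x))
        = Real.log ((a:ℝ)*x+b) - Real.log ((a:ℝ)*x) :=
      Real.log_div (by positivity) (ne_of_gt hax)
    have hq : (0:ℝ) < ((a:ℝ)*x+b)/((a:ℝ)*x) := by positivity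
    have hle : Real.log (((a:ℝ)*x+b)/((a:ℝ)*x)) ≤ ((a:ℝ)*x+b)/((a:ℝ)*x) - 1 :=
      Real.log_le_sub_one_of_pos hq
    have heq : ((a:ℝ)*x+b)/((a:ℝ)*x) - 1 = (b:ℝ)/((a:ℝ)*x) := by
      field_simp
      ring
    have hlast : (b:ℝ)/((a:ℝ)*x) ≤ (b:ℝ)/((a:ℝ)*m) := by
      gcongr
    linarith [hdiv ▸ hle, hmul]
  have hS_pos : 0 < ((K:ℝ)+L) * Real.log 2 - K * Real.log a := by
    rw [← hSum]
    exact Finset.sum_pos hterm_pos hne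
  have hS_le : ((K:ℝ)+L) * Real.log 2 - K * Real.log a ≤ (K:ℝ) * ((b:ℝ)/((a:ℝ)*m)) := by
    rw [← hSum]
    calc ∑ x ∈ Ω₁, (Real.log ((a:ℝ)*x+b) - Real.log (x:ℝ) - Real.log (a:ℝ))
        ≤ ∑ _x ∈ Ω₁, (b:ℝ)/((a:ℝ)*m) := Finset.sum_le_sum hterm_le
      _ = (K:ℝ) * ((b:ℝ)/((a:ℝ)*m)) := by
          rw [Finset.sum_const, hK, nsmul_eq_mul]
  have hexpr : ((K:ℝ) + L) - K * (Real.log a / Real.log 2)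
      = (((K:ℝ)+L) * Real.log 2 - K * Real.log a) / Real.log 2 := by
    field_simp
  constructor
  · rw [hexpr]
    exact div_pos hS_pos hlog2
  · rw [hexpr]
    have h1 : (((K:ℝ)+L) * Real.log 2 - K * Real.log a) / Real.log 2
        ≤ ((K:ℝ) * ((b:ℝ)/((a:ℝ)*m))) / Real.log 2 := by
      gcongr
    refine h1.trans_eq ?_
    field_simp
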